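/- Let t > 0, let X be a random variable with the discrete Laplace distribution Lap_ℤ(t), and let T ≥ 1 be an integer. Then the distribution of X conditioned on |X| ≥ T equals the distribution of σ·(W + T), where σ is uniform on {−1, +1}, W has the geometric distribution on {0, 1, 2, ...} with success probability 1 − e^{−1/t}, and σ and W are independent. -/

import Mathlib

open scoped ENNReal Classical

/-- For `X ∼ Lap_ℤ(t)` and an integer `T ≥ 1`, the distribution of `X` conditioned on
`|X| ≥ T` equals the distribution of `σ (W + T)` where `σ` is a uniform sign and `W`
is geometric on `{0, 1, 2, …}` with success probability `1 − e^{−1/t}`, independent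
of `σ`. -/
theorem stmt15 (t : ℝ) (ht : 0 < t) (X : PMF ℤ)
    (hX : ∀ x : ℤ, X x = ENNReal.ofReal
      ((Real.exp (1 / t) - 1) / (Real.exp (1 / t) + 1) * Real.exp (-|(x : ℝ)| / t)))
    (T : ℕ) (hT : 1 ≤ T)
    (C : PMF ℤ)
    (hC : ∀ x : ℤ, C x =
      (if (T : ℤ) ≤ |x| then X x else 0) / X.toOuterMeasure {z : ℤ | (T : ℤ) ≤ |z|})
    (W : PMF ℕ)
    (hW : ∀ k : ℕ, W k =
      ENNReal.ofReal ((1 - Real.exp (-1 / t)) * Real.exp (-1 / t) ^ k)) :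
    C = W.bind (fun w =>
      (PMF.uniformOfFinset ({-1, 1} : Finset ℤ) ⟨-1, by simp⟩).map
        (fun sg => sg * ((w : ℤ) + (T : ℤ)))) := by
  -- Basic real-number facts
  set q : ℝ := Real.exp (-1 / t) with hqdef
  have hq0 : 0 < q := Real.exp_pos _
  have hq1 : q < 1 := by
    rw [hqdef]
    have h : -1 / t < 0 := by
      rw [neg_div]
      have : (0:ℝ) < 1 / t := by positivity
      linarith
    simpa using Real.exp_lt_one_iff.mpr h
  set c : ℝ := (Real.exp (1 / t) - 1) / (Real.exp (1 / t) + 1) with hcdef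
  have hc0 : 0 < c := by
    apply div_pos
    · have : (1:ℝ) < Real.exp (1 / t) := by
        rw [show (1:ℝ) = Real.exp 0 by simp]
        exact Real.exp_lt_exp.mpr (by positivity)
      linarith
    · positivity
  set q' : ℝ≥0∞ := ENNReal.ofReal q with hq'def
  set c' : ℝ≥0∞ := ENNReal.ofReal c with hc'def
  have hq'1 : q' < 1 := by
    rw [hq'def]; exact ENNReal.ofReal_lt_one.mpr hq1
  have hq'0 : q' ≠ 0 := by
    rw [hq'def]; exact (ENNReal.ofReal_pos.mpr hq0).ne'
  have hq'top : q' ≠ ∞ := by rw [hq'def]; exact ENNReal.ofReal_ne_top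
  have hc'0 : c' ≠ 0 := by
    rw [hc'def]; exact (ENNReal.ofReal_pos.mpr hc0).ne'
  have hc'top : c' ≠ ∞ := by rw [hc'def]; exact ENNReal.ofReal_ne_top
  have h1q'0 : 1 - q' ≠ 0 := (tsub_pos_of_lt hq'1).ne'
  have h1q'top : 1 - q' ≠ ∞ :=
    (tsub_le_self.trans_lt ENNReal.one_lt_top).ne
  -- Rewriting the PMFs in terms of `c'` and `q'`
  have hXq : ∀ x : ℤ, X x = c' * q' ^ x.natAbs := by
    intro x
    rw [hX x]
    have h1 : Real.exp (-|(x:ℝ)| / t) = q ^ x.natAbs := by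
      rw [hqdef, ← Real.exp_nat_mul]
      congr 1
      have : |(x:ℝ)| = (x.natAbs : ℝ) := by
        simp [Nat.cast_natAbs]
      rw [this]; ring
    rw [h1, ENNReal.ofReal_mul hc0.le, ENNReal.ofReal_pow hq0.le]
  have hWq : ∀ k : ℕ, W k = (1 - q') * q' ^ k := by
    intro k
    rw [hW k, ENNReal.ofReal_mul (by linarith), ENNReal.ofReal_pow hq0.le]
    congr 1
    rw [ENNReal.ofReal_sub _ hq0.le]
    simp [hq'def]
  -- The normalizing constant
  set D : ℝ≥0∞ := X.toOuterMeasure {z : ℤ | (T : ℤ) ≤ |z|} with hDdef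
  have hD : D = 2 * (c' * q' ^ T * (1 - q')⁻¹) := by
    have hgeom : ∀ (a : ℝ≥0∞) (k : ℕ),
        (∑' n : ℕ, if k ≤ n then a * q' ^ n else 0) = a * q' ^ k * (1 - q')⁻¹ := by
      intro a k
      have hinj : Function.Injective (fun m : ℕ => m + k) := add_left_injective k
      have hsupp : Function.support (fun n : ℕ => if k ≤ n then a * q' ^ n else 0)
          ⊆ Set.range (fun m : ℕ => m + k) := by
        intro n hn
        simp only [Function.mem_support, ne_eq, ite_eq_right_iff, not_forall] at hn
        exact ⟨n - k, Nat.sub_add_cancel hn.1⟩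
      rw [← Function.Injective.tsum_eq hinj hsupp]
      have heq : ∀ m : ℕ, (if k ≤ m + k then a * q' ^ (m + k) else 0)
          = (a * q' ^ k) * q' ^ m := by
        intro m
        rw [if_pos (Nat.le_add_left k m), pow_add]
        ring
      calc (∑' m : ℕ, if k ≤ m + k then a * q' ^ (m + k) else 0)
          = ∑' m : ℕ, (a * q' ^ k) * q' ^ m := tsum_congr heq
        _ = (a * q' ^ k) * ∑' m : ℕ, q' ^ m := ENNReal.tsum_mul_left
        _ = a * q' ^ k * (1 - q')⁻¹ := by rw [ENNReal.tsum_geometric]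
    obtain ⟨S, hTS⟩ : ∃ S, T = S + 1 := ⟨T - 1, (Nat.succ_pred_eq_of_pos hT).symm⟩
    subst hTS
    set F : ℤ → ℝ≥0∞ := fun z => if ((S + 1 : ℕ) : ℤ) ≤ |z| then X z else 0 with hF
    have h1 : D = ∑' z : ℤ, F z := by
      rw [hDdef, PMF.toOuterMeasure_apply]
      exact tsum_congr fun z => by simp [Set.indicator_apply, hF]
    have h2 : (∑' z : ℤ, F z) =
        (∑' n : ℕ, F n) + ∑' n : ℕ, F (Int.negSucc n) := by
      rw [← tsum_int_rec (f := fun n : ℕ => F n) (g := fun n : ℕ => F (Int.negSucc n))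
        ENNReal.summable ENNReal.summable]
      exact tsum_congr fun z => by cases z <;> rfl
    have h3 : (∑' n : ℕ, F n) = c' * q' ^ (S + 1) * (1 - q')⁻¹ := by
      have : ∀ n : ℕ, F n = if S + 1 ≤ n then c' * q' ^ n else 0 := by
        intro n
        rw [hF]
        simp only [hXq]
        norm_num [Int.natAbs_natCast]
      rw [tsum_congr this, hgeom]
    have h4 : (∑' n : ℕ, F (Int.negSucc n)) = c' * q' ^ (S + 1) * (1 - q')⁻¹ := by
      have : ∀ n : ℕ, F (Int.negSucc n) = if S ≤ n then (c' * q') * q' ^ n else 0 := by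
        intro n
        rw [hF]
        simp only [hXq]
        have habs : |Int.negSucc n| = ((n + 1 : ℕ) : ℤ) := rfl
        have hna : (Int.negSucc n).natAbs = n + 1 := rfl
        rw [habs, hna]
        have hcond : (((S + 1 : ℕ) : ℤ) ≤ ((n + 1 : ℕ) : ℤ)) ↔ (S ≤ n) := by
          constructor
          · intro h; omega
          · intro h; omega
        by_cases h : S ≤ n
        · rw [if_pos (hcond.mpr h), if_pos h, pow_succ]
          ring
        · rw [if_neg (fun hh => h (hcond.mp hh)), if_neg h]
      rw [tsum_congr this, hgeom, pow_succ]
      ring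
    rw [h1, h2, h3, h4, two_mul]
  have hD0 : D ≠ 0 := by
    rw [hD]
    exact mul_ne_zero two_ne_zero (mul_ne_zero (mul_ne_zero hc'0 (pow_ne_zero _ hq'0))
      (ENNReal.inv_ne_zero.mpr h1q'top))
  have hDtop : D ≠ ∞ := by
    rw [hD]
    exact ENNReal.mul_ne_top ENNReal.ofNat_ne_top
      (ENNReal.mul_ne_top (ENNReal.mul_ne_top hc'top (ENNReal.pow_ne_top hq'top))
        (ENNReal.inv_ne_top.mpr h1q'0))
  -- The RHS formula
  have hRHS : ∀ x : ℤ,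
      (W.bind (fun w =>
        (PMF.uniformOfFinset ({-1, 1} : Finset ℤ) ⟨-1, by simp⟩).map
          (fun sg => sg * ((w : ℤ) + (T : ℤ))))) x
      = if (T : ℤ) ≤ |x| then (1 - q') * q' ^ (x.natAbs - T) * 2⁻¹ else 0 := by
    intro x
    have hmap : ∀ (w : ℕ) (y : ℤ),
        ((PMF.uniformOfFinset ({-1, 1} : Finset ℤ) ⟨-1, by simp⟩).map
            (fun sg => sg * ((w : ℤ) + (T : ℤ)))) y
        = (if y = -((w : ℤ) + T) then 2⁻¹ else 0)
          + (if y = ((w : ℤ) + T) then 2⁻¹ else 0) := by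
      intro w y
      generalize_proofs hs
      rw [PMF.map_apply]
      rw [tsum_eq_sum (s := ({-1, 1} : Finset ℤ))
        (fun b hb => by simp [PMF.uniformOfFinset_apply,
          (by simpa using hb : b ≠ -1 ∧ b ≠ 1).1, (by simpa using hb : b ≠ -1 ∧ b ≠ 1).2])]
      rw [Finset.sum_pair (by norm_num : (-1 : ℤ) ≠ 1)]
      simp only [PMF.uniformOfFinset_apply]
      norm_num
    rw [PMF.bind_apply]
    simp only [hmap]
    rw [Int.abs_eq_natAbs]
    by_cases hcase : (T : ℤ) ≤ (x.natAbs : ℤ)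
    · rw [if_pos hcase]
      have hn : T ≤ x.natAbs := by exact_mod_cast hcase
      rw [tsum_eq_single (x.natAbs - T) ?_]
      · rcases lt_trichotomy x 0 with hx | hx | hx
        · have c1 : x = -(((x.natAbs - T : ℕ) : ℤ) + T) := by omega
          have c2 : ¬(x = ((x.natAbs - T : ℕ) : ℤ) + T) := by omega
          rw [if_pos c1, if_neg c2, hWq]
          ring
        · exfalso; omega
        · have c1 : ¬(x = -(((x.natAbs - T : ℕ) : ℤ) + T)) := by omega
          have c2 : x = ((x.natAbs - T : ℕ) : ℤ) + T := by omega
          rw [if_neg c1, if_pos c2, hWq]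
          ring
      · intro w hw
        have c1 : ¬(x = -((w : ℤ) + T)) := by omega
        have c2 : ¬(x = (w : ℤ) + T) := by omega
        rw [if_neg c1, if_neg c2]
        simp
    · rw [if_neg hcase, ENNReal.tsum_eq_zero]
      intro w
      have c1 : ¬(x = -((w : ℤ) + T)) := by omega
      have c2 : ¬(x = (w : ℤ) + T) := by omega
      rw [if_neg c1, if_neg c2]
      simp
  -- Putting everything together
  ext x
  rw [hC x, hRHS x]
  by_cases hcase : (T : ℤ) ≤ |x|
  · rw [if_pos hcase, if_pos hcase]
    have hn : T ≤ x.natAbs := by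
      rw [Int.abs_eq_natAbs] at hcase
      exact_mod_cast hcase
    have hXxD : X x = ((1 - q') * q' ^ (x.natAbs - T) * 2⁻¹) * D := by
      rw [hXq x, hD]
      have e1 : (1 - q') * (1 - q')⁻¹ = 1 := ENNReal.mul_inv_cancel h1q'0 h1q'top
      have e2 : (2 : ℝ≥0∞)⁻¹ * 2 = 1 :=
        ENNReal.inv_mul_cancel two_ne_zero ENNReal.ofNat_ne_top
      calc c' * q' ^ x.natAbs
          = c' * (q' ^ (x.natAbs - T) * q' ^ T) := by
            rw [← pow_add, Nat.sub_add_cancel hn]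
        _ = ((1 - q') * (1 - q')⁻¹) * ((2 : ℝ≥0∞)⁻¹ * 2)
            * (c' * (q' ^ (x.natAbs - T) * q' ^ T)) := by rw [e1, e2]; ring
        _ = (1 - q') * q' ^ (x.natAbs - T) * 2⁻¹ * (2 * (c' * q' ^ T * (1 - q')⁻¹)) := by
            ring
    rw [hXxD, mul_div_assoc, ENNReal.div_self hD0 hDtop, mul_one]
  · rw [if_neg hcase, if_neg hcase, ENNReal.zero_div]
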